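/- For all integers k ≥ 3 and 1 ≤ ℓ < k/2 and every γ > 0 there exists ξ = ξ(k,ℓ,γ) > 0 such that for all sufficiently large n the following holds: every k-uniform hypergraph H on n vertices with δ_{k−2}(H) ≥ ((4(k−ℓ)−1)/(4(k−ℓ)²) + γ)·C(n,2) is not (ℓ,ξ)-extremal. -/

import Mathlib

open Finset

/-- Number of edges of the hypergraph `E` containing the vertex set `S`. -/
def degH {n : ℕ} (E : Finset (Finset (Fin n))) (S : Finset (Fin n)) : ℕ :=
  (E.filter fun e => S ⊆ e).card

/-- `E` is `(ℓ,ξ)`-extremal: there is a vertex set `B` of size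
`⌊(2(k-ℓ)-1)n/(2(k-ℓ))⌋` spanning at most `ξ·C(n,k)` edges. -/
def IsExtremal {n : ℕ} (k l : ℕ) (ξ : ℝ) (E : Finset (Finset (Fin n))) : Prop :=
  ∃ B : Finset (Fin n), B.card = (2 * (k - l) - 1) * n / (2 * (k - l)) ∧
    ((E.filter fun e => e ⊆ B).card : ℝ) ≤ ξ * (Nat.choose n k)

lemma key1 (M N B γ : ℝ) (hM : 2 ≤ M) (hγ : 0 < γ) (hN : 12 / γ + 12 ≤ N)
    (hB : (2*M - 1) * N ≤ 2*M*B + 2*M) :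
    (γ/2) * (N*(N-1)/2) + (N*(N-1)/2 - B*(B-1)/2)
      ≤ ((4*M - 1)/(4*M^2) + γ) * (N*(N-1)/2) := by
  have hM0 : (0:ℝ) < M := by linarith
  have hγ12 : (0:ℝ) ≤ 12/γ := by positivity
  have hN12 : (12:ℝ) ≤ N := by linarith
  have hγN : 12 + 12*γ ≤ γ * N := by
    have := mul_le_mul_of_nonneg_left hN hγ.le
    have h12 : γ * (12/γ) = 12 := by field_simp
    nlinarith [this]
  have hX4 : 0 ≤ (2*M-1)*N - 4*M := by nlinarith
  have hprod : ((2*M-1)*N - 2*M) * ((2*M-1)*N - 4*M) ≤ (2*M*B) * (2*M*(B-1)) :=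
    mul_le_mul (by linarith) (by linarith) (by linarith) (by linarith)
  have hγN1 : (12:ℝ) ≤ γ*(N-1) := by nlinarith
  have hbig : 12*N*M^2 ≤ γ*(N-1)*N*M^2 := by
    have h1 : 12*N ≤ γ*(N-1)*N :=
      mul_le_mul_of_nonneg_right hγN1 (by linarith)
    exact mul_le_mul_of_nonneg_right h1 (by positivity)
  have hM2N : (0:ℝ) ≤ M^2*N := by positivity
  have hMN : (0:ℝ) ≤ M*N := by positivity
  have h4 : (0:ℝ) < 4*M^2 := by positivity
  rw [← mul_le_mul_iff_right₀ h4]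
  have hc : 4*M^2 * (((4*M - 1)/(4*M^2) + γ) * (N*(N-1)/2))
      = (4*M-1) * (N*(N-1)/2) + 4*M^2*γ*(N*(N-1)/2) := by
    field_simp
  rw [hc]
  nlinarith [hprod, hbig, hM2N, hMN, sq_nonneg M]


set_option maxHeartbeats 1000000 in
theorem stmt12 (k l : ℕ) (hk : 3 ≤ k) (hl1 : 1 ≤ l) (hl2 : 2 * l < k)
    (γ : ℝ) (hγ : 0 < γ) :
    ∃ ξ : ℝ, 0 < ξ ∧ ∃ n₀ : ℕ, ∀ n : ℕ, n₀ ≤ n →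
      ∀ E : Finset (Finset (Fin n)), (∀ e ∈ E, e.card = k) →
        (∀ S : Finset (Fin n), S.card = k - 2 →
          ((4 * ((k : ℝ) - l) - 1) / (4 * ((k : ℝ) - l) ^ 2) + γ) *
              (Nat.choose n 2) ≤ (degH E S : ℝ)) →
        ¬ IsExtremal k l ξ E := by
  have hk0 : 0 < k := by omega
  refine ⟨γ / (2 * 4^k * (k*k) * k.factorial), by positivity,
    ⌈12/γ⌉₊ + 12 + 100*k, ?_⟩
  intro n hn E hcard hdeg hext
  set ξ := γ / (2 * 4^k * (k*k) * (k.factorial : ℝ)) with hξdef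
  obtain ⟨B, hBcard, hext⟩ := hext
  set m := k - l with hmdef
  have hm2 : 2 ≤ m := by omega
  have hlk : l ≤ k := by omega
  set b := B.card with hbdef
  set Nr : ℝ := (n : ℝ) with hNrdef
  set Mr : ℝ := (m : ℝ) with hMrdef
  -- basic cast facts
  have hMcast : ((k:ℝ) - (l:ℝ)) = Mr := by
    rw [hMrdef, hmdef]; push_cast [Nat.cast_sub hlk]; ring
  have hMr2 : (2:ℝ) ≤ Mr := by rw [hMrdef]; exact_mod_cast hm2
  have hn12 : 12/γ + 12 ≤ Nr := by
    have h1 : (12:ℝ)/γ ≤ (⌈12/γ⌉₊ : ℝ) := Nat.le_ceil _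
    have h2 : ((⌈12/γ⌉₊ + 12 : ℕ) : ℝ) ≤ Nr := by
      rw [hNrdef]; exact_mod_cast le_trans (by omega) hn
    push_cast at h2; linarith
  have hNpos : (0:ℝ) < Nr := by
    have : (0:ℝ) ≤ 12/γ := by positivity
    linarith
  have hn100k : (100:ℝ) * k ≤ Nr := by
    rw [hNrdef]; exact_mod_cast le_trans (by omega) hn
  -- floor bounds for b
  have hBreal : (2*Mr - 1) * Nr ≤ 2*Mr*(b:ℝ) + 2*Mr := by
    have h1 := Nat.div_add_mod ((2*m-1)*n) (2*m)
    rw [← hBcard] at h1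
    have h2 : (2*m-1)*n % (2*m) < 2*m := Nat.mod_lt _ (by omega)
    have h1' : 2*Mr*(b:ℝ) + (((2*m-1)*n % (2*m) : ℕ):ℝ) = (2*Mr - 1)*Nr := by
      have h1r : ((2*m*b : ℕ) : ℝ) + (((2*m-1)*n % (2*m) : ℕ):ℝ)
          = (((2*m-1)*n : ℕ):ℝ) := by exact_mod_cast h1
      rw [hMrdef, hNrdef]
      push_cast [Nat.cast_sub (show 1 ≤ 2*m by omega)] at h1r ⊢
      linarith [h1r]
    have h2' : (((2*m-1)*n % (2*m) : ℕ):ℝ) < 2*Mr := by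
      rw [hMrdef]; exact_mod_cast h2
    linarith
  have hbn : b ≤ n := by
    calc b ≤ Fintype.card (Fin n) := Finset.card_le_univ B
    _ = n := Fintype.card_fin n
  have hblow : (3/4) * Nr - 1 ≤ (b:ℝ) := by
    nlinarith [hBreal, hMr2, hNpos, mul_nonneg (sub_nonneg.mpr hMr2) hNpos.le]
  classical
  set E' := E.filter (fun e => e ⊆ B) with hE'def
  have hS : ∀ S ∈ B.powersetCard (k-2),
      (γ/2) * ((Nat.choose n 2 : ℕ) : ℝ) ≤ ((E'.filter (fun e => S ⊆ e)).card : ℝ) := by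
    intro S hSmem
    obtain ⟨hSB, hScard⟩ := Finset.mem_powersetCard.mp hSmem
    have hsplit : ((E.filter (fun e => S ⊆ e)).filter (fun e => e ⊆ B)).card
        + ((E.filter (fun e => S ⊆ e)).filter (fun e => ¬ e ⊆ B)).card = degH E S :=
      Finset.card_filter_add_card_filter_not _
    have hfirst : (E.filter (fun e => S ⊆ e)).filter (fun e => e ⊆ B)
        = E'.filter (fun e => S ⊆ e) := by
      rw [hE'def, Finset.filter_comm]
    have hbad : ((E.filter (fun e => S ⊆ e)).filter (fun e => ¬ e ⊆ B)).card
        ≤ (((univ : Finset (Fin n)).powersetCard 2).filter (fun p => ¬ p ⊆ B)).card := by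
      apply Finset.card_le_card_of_injOn (fun e => e \ S)
      · intro e he
        simp only [Finset.mem_coe, Finset.mem_filter, Finset.mem_powersetCard] at he ⊢
        obtain ⟨⟨heE, hSe⟩, heB⟩ := he
        refine ⟨⟨Finset.subset_univ _, ?_⟩, ?_⟩
        · rw [Finset.card_sdiff_of_subset hSe, hcard e heE, hScard]; omega
        · intro hsub
          apply heB
          intro x hx
          by_cases hxS : x ∈ S
          · exact hSB hxS
          · exact hsub (Finset.mem_sdiff.mpr ⟨hx, hxS⟩)
      · intro e1 h1 e2 h2 heq
        simp only [Finset.coe_filter, Set.mem_setOf_eq, Finset.mem_filter] at h1 h2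
        have h1' : S ⊆ e1 := h1.1.2
        have h2' : S ⊆ e2 := h2.1.2
        have heq' : e1 \ S = e2 \ S := heq
        rw [← Finset.union_sdiff_of_subset h1', ← Finset.union_sdiff_of_subset h2', heq']
    have hTcount : Nat.choose b 2
        + (((univ : Finset (Fin n)).powersetCard 2).filter (fun p => ¬ p ⊆ B)).card
        = Nat.choose n 2 := by
      have h0 : ((univ : Finset (Fin n)).powersetCard 2).filter (fun p => p ⊆ B)
          = B.powersetCard 2 := by
        ext p
        simp only [Finset.mem_filter, Finset.mem_powersetCard, Finset.subset_univ,
          true_and]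
        tauto
      have h1 := Finset.card_filter_add_card_filter_not
        (s := ((univ : Finset (Fin n)).powersetCard 2)) (p := fun p => p ⊆ B)
      rw [h0, Finset.card_powersetCard, Finset.card_powersetCard, Finset.card_univ,
        Fintype.card_fin] at h1
      exact h1
    have hdegS := hdeg S hScard
    rw [hMcast] at hdegS
    have hc2n : ((Nat.choose n 2 : ℕ) : ℝ) = Nr*(Nr-1)/2 := Nat.cast_choose_two (K := ℝ) n
    have hc2b : ((Nat.choose b 2 : ℕ) : ℝ) = (b:ℝ)*((b:ℝ)-1)/2 := Nat.cast_choose_two (K := ℝ) b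
    have hkey := key1 Mr Nr (b:ℝ) γ hMr2 hγ hn12 hBreal
    have hsplitR : (((E.filter (fun e => S ⊆ e)).filter (fun e => e ⊆ B)).card : ℝ)
        + (((E.filter (fun e => S ⊆ e)).filter (fun e => ¬ e ⊆ B)).card : ℝ)
        = (degH E S : ℝ) := by exact_mod_cast hsplit
    have hTcountR : ((Nat.choose b 2 : ℕ) : ℝ)
        + ((((univ : Finset (Fin n)).powersetCard 2).filter (fun p => ¬ p ⊆ B)).card : ℝ)
        = ((Nat.choose n 2 : ℕ) : ℝ) := by exact_mod_cast hTcount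
    have hbadR : (((E.filter (fun e => S ⊆ e)).filter (fun e => ¬ e ⊆ B)).card : ℝ)
        ≤ ((((univ : Finset (Fin n)).powersetCard 2).filter (fun p => ¬ p ⊆ B)).card : ℝ) := by
      exact_mod_cast hbad
    rw [hfirst] at hsplitR
    rw [hc2n] at hdegS
    rw [hc2n, hc2b] at hTcountR
    rw [hc2n]
    linarith [hkey, hdegS, hsplitR, hbadR, hTcountR]
  -- double counting
  have hdc : ∑ S ∈ B.powersetCard (k-2), (E'.filter (fun e => S ⊆ e)).card
      = E'.card * Nat.choose k 2 := by
    calc ∑ S ∈ B.powersetCard (k-2), (E'.filter (fun e => S ⊆ e)).card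
        = ∑ S ∈ B.powersetCard (k-2), ∑ e ∈ E', if S ⊆ e then 1 else 0 := by
          refine Finset.sum_congr rfl fun S _ => ?_
          rw [Finset.card_filter]
      _ = ∑ e ∈ E', ∑ S ∈ B.powersetCard (k-2), if S ⊆ e then 1 else 0 :=
          Finset.sum_comm
      _ = ∑ e ∈ E', ((B.powersetCard (k-2)).filter (fun S => S ⊆ e)).card := by
          refine Finset.sum_congr rfl fun e _ => ?_
          rw [Finset.card_filter]
      _ = ∑ e ∈ E', Nat.choose k 2 := by
          refine Finset.sum_congr rfl fun e he => ?_
          rw [hE'def, Finset.mem_filter] at he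
          have hek : e.card = k := hcard e he.1
          have hfe : (B.powersetCard (k-2)).filter (fun S => S ⊆ e)
              = e.powersetCard (k-2) := by
            ext S
            simp only [Finset.mem_filter, Finset.mem_powersetCard]
            constructor
            · rintro ⟨⟨_, hSc⟩, hSe⟩; exact ⟨hSe, hSc⟩
            · rintro ⟨hSe, hSc⟩; exact ⟨⟨hSe.trans he.2, hSc⟩, hSe⟩
          rw [hfe, Finset.card_powersetCard, hek]
          exact Nat.choose_symm (by omega)
      _ = E'.card * Nat.choose k 2 := by rw [Finset.sum_const, smul_eq_mul]
  have hsum := Finset.card_nsmul_le_sum (B.powersetCard (k-2))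
      (fun S => ((E'.filter (fun e => S ⊆ e)).card : ℝ))
      ((γ/2) * ((Nat.choose n 2 : ℕ) : ℝ)) hS
  have hsumR : ((Nat.choose b (k-2) : ℕ) : ℝ) * ((γ/2) * ((Nat.choose n 2:ℕ):ℝ))
      ≤ (E'.card : ℝ) * ((Nat.choose k 2 : ℕ) : ℝ) := by
    have hcast : ∑ S ∈ B.powersetCard (k-2), ((E'.filter (fun e => S ⊆ e)).card : ℝ)
        = (E'.card : ℝ) * ((Nat.choose k 2 : ℕ) : ℝ) := by
      rw [← Nat.cast_sum]
      rw [hdc]; push_cast; ring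
    rw [Finset.card_powersetCard, nsmul_eq_mul, hcast] at hsum
    exact hsum
  set r := k - 2 with hrdef
  have hrk : r + 2 = k := by omega
  have hkR3 : (3:ℝ) ≤ (k:ℝ) := by exact_mod_cast hk
  have hbk : k ≤ b := by
    have hkr : (k:ℝ) ≤ (b:ℝ) := by linarith [hn100k, hblow, hkR3]
    exact_mod_cast hkr
  have hN12' : (12:ℝ) ≤ Nr := by
    have : (0:ℝ) ≤ 12/γ := by positivity
    linarith
  have hchooseb : ((Nr/4)^r) / (r.factorial : ℝ) ≤ ((Nat.choose b r : ℕ) : ℝ) := by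
    have h1 := Nat.pow_le_choose (α := ℝ) r b
    refine le_trans ?_ h1
    have hsub : ((b + 1 - r : ℕ) : ℝ) = (b:ℝ) + 1 - (r:ℝ) := by
      have hle : r ≤ b + 1 := by omega
      push_cast [Nat.cast_sub hle]; ring
    have hrkR : (r:ℝ) ≤ (k:ℝ) := by exact_mod_cast (by omega : r ≤ k)
    have hbr : Nr/4 ≤ ((b + 1 - r : ℕ) : ℝ) := by
      rw [hsub]; linarith [hblow, hn100k, hrkR, hNpos]
    have hpow : (Nr/4)^r ≤ ((b + 1 - r : ℕ) : ℝ)^r :=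
      pow_le_pow_left₀ (by positivity) hbr r
    gcongr
  have hQlow : (Nr*Nr/4) ≤ ((Nat.choose n 2 : ℕ):ℝ) := by
    rw [Nat.cast_choose_two (K := ℝ)]
    nlinarith [hN12']
  have hCk2 : ((Nat.choose k 2 : ℕ) : ℝ) ≤ (k:ℝ)*(k:ℝ) := by
    have h := Nat.choose_le_pow k 2
    calc ((Nat.choose k 2 : ℕ) : ℝ) ≤ ((k^2 : ℕ):ℝ) := by exact_mod_cast h
    _ = (k:ℝ)*(k:ℝ) := by push_cast; ring
  have hCnk : ((Nat.choose n k : ℕ):ℝ) ≤ Nr^k := by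
    rw [hNrdef]; exact_mod_cast Nat.choose_le_pow n k
  have hkR0 : (k:ℝ) ≠ 0 := by positivity
  have hfac0 : (k.factorial : ℝ) ≠ 0 := by
    exact_mod_cast k.factorial_pos.ne'
  have hξpos : 0 < ξ := by rw [hξdef]; positivity
  have hup : ((Nat.choose b r : ℕ) : ℝ) * ((γ/2) * ((Nat.choose n 2:ℕ):ℝ))
      ≤ γ * Nr^k / (2 * 4^k * (k.factorial : ℝ)) := by
    have h1 : (E'.card : ℝ) * ((Nat.choose k 2:ℕ) : ℝ)
        ≤ (ξ * ((Nat.choose n k:ℕ) : ℝ)) * ((Nat.choose k 2:ℕ) : ℝ) :=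
      mul_le_mul_of_nonneg_right hext (by positivity)
    have h2 : ξ * ((Nat.choose n k:ℕ):ℝ) * ((Nat.choose k 2:ℕ):ℝ)
        ≤ ξ * Nr^k * ((k:ℝ)*(k:ℝ)) :=
      mul_le_mul (mul_le_mul_of_nonneg_left hCnk hξpos.le) hCk2
        (by positivity) (by positivity)
    have h3 : ξ * Nr^k * ((k:ℝ)*(k:ℝ)) = γ * Nr^k / (2*4^k*(k.factorial:ℝ)) := by
      rw [hξdef]; field_simp
    rw [← h3]
    linarith [hsumR, h1, h2]
  have hlowstrict : γ * Nr^k / (2*4^k*(k.factorial:ℝ))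
      < ((Nat.choose b r : ℕ) : ℝ) * ((γ/2)*((Nat.choose n 2:ℕ):ℝ)) := by
    have hA : ((Nr/4)^r / (r.factorial:ℝ)) * ((γ/2)*(Nr*Nr/4))
        ≤ ((Nat.choose b r : ℕ) : ℝ) * ((γ/2)*((Nat.choose n 2:ℕ):ℝ)) :=
      mul_le_mul hchooseb (mul_le_mul_of_nonneg_left hQlow (by positivity))
        (by positivity) (Nat.cast_nonneg _)
    have hEq : ((Nr/4)^r / (r.factorial:ℝ)) * ((γ/2)*(Nr*Nr/4))
        = 2 * (γ * Nr^k) / (4^k * (r.factorial:ℝ)) := by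
      rw [← hrk, pow_add, pow_add]
      have hrfac0 : (r.factorial : ℝ) ≠ 0 := by exact_mod_cast r.factorial_pos.ne'
      field_simp
      rw [mul_assoc, ← mul_pow, div_mul_cancel₀ _ (by norm_num : (4:ℝ) ≠ 0)]; norm_num
    have hfacle : (r.factorial : ℝ) ≤ (k.factorial : ℝ) := by
      exact_mod_cast Nat.factorial_le (by omega : r ≤ k)
    have hrfacpos : (0:ℝ) < (r.factorial : ℝ) := by exact_mod_cast r.factorial_pos
    have hstrict : γ * Nr^k / (2*4^k*(k.factorial:ℝ)) < 2*(γ*Nr^k)/(4^k*(r.factorial:ℝ)) := by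
      rw [div_lt_div_iff₀ (by positivity) (by positivity)]
      have hp : (0:ℝ) < γ * Nr^k * 4^k := by positivity
      nlinarith [mul_le_mul_of_nonneg_left hfacle hp.le,
        mul_pos hp (lt_of_lt_of_le hrfacpos hfacle)]
    linarith
  linarith [hup, hlowstrict]
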